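/- Let d be the code distance of the polynomial remainder code with moduli m_1(x), …, m_L(x), let τ_1 = min_{2 ≤ j ≤ L} deg(gcd(m_1(x), m_j(x))), and let λ be a nonnegative integer with λ < τ_1. Let a(x), b(x) ∈ F[x] with deg(a) < deg(M) and deg(b) < deg(M), and let ã_i(x) (1 ≤ i ≤ L) satisfy deg(ã_i) < deg(m_i); set e_i(x) = ã_i(x) − [a]_{m_i}(x) and f_i(x) = ã_i(x) − [b]_{m_i}(x). If the number of indices i with deg(e_i) > λ is at most ⌊(d−1)/2⌋, the number of indices i with deg(f_i) > λ is at most ⌊(d−1)/2⌋, deg(e_1) ≤ λ, and deg(f_1) ≤ λ, then a(x) − [a]_{m_1}(x) = b(x) − [b]_{m_1}(x); in particular, the folding polynomials of a and b with respect to m_1 coincide and deg(a − b) ≤ λ. (The folding polynomial k_1(x) is accurately determined whenever the reference residue has at most a bounded error.) -/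

import Mathlib

open Polynomial
open scoped Classical

/-- The code distance of the polynomial remainder code with moduli `m i`, `i ∈ s`. -/
noncomputable def codeDist {F : Type*} [Field F] {ι : Type*} (s : Finset ι)
    (m : ι → Polynomial F) : ℕ :=
  sInf {k | ∃ a : Polynomial F, a ≠ 0 ∧ a.degree < (s.lcm m).degree ∧
    (s.filter fun i => ¬ m i ∣ a).card = k}

/-- if at most `⌊(d−1)/2⌋` residue errors have degree greater than `λ`
(`λ < τ_1`), and the reference residue (the first one) has error of degree at most
`λ`, then the folding polynomial with respect to `m_1` is uniquely determined:
any two polynomials `a, b` consistent with the received residues in this way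
satisfy `a − [a]_{m_1} = b − [b]_{m_1}`, and in particular `deg(a − b) ≤ λ`. -/
theorem stmt9 {F : Type*} [Field F] {L : ℕ} (hL : 2 ≤ L)
    (m : Fin L → Polynomial F)
    (hmonic : ∀ i, (m i).Monic)
    (hdist : Function.Injective m)
    (hdeg : ∀ i, 0 < (m i).degree)
    (hm_lt : ∀ i, (m i).degree < (Finset.univ.lcm m).degree)
    (i0 : Fin L) (hi0 : i0 = ⟨0, by omega⟩)
    (d : ℕ) (hd : d = codeDist Finset.univ m)
    (τ1 : ℕ)
    (hτ1 : τ1 = sInf {n | ∃ j, j ≠ i0 ∧ n = (gcd (m i0) (m j)).natDegree})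
    (lam : ℕ) (hlam : lam < τ1)
    (a b : Polynomial F)
    (ha : a.degree < (Finset.univ.lcm m).degree)
    (hb : b.degree < (Finset.univ.lcm m).degree)
    (r : Fin L → Polynomial F)
    (hr : ∀ i, (r i).degree < (m i).degree)
    (e f : Fin L → Polynomial F)
    (he : ∀ i, e i = r i - a %ₘ m i)
    (hf : ∀ i, f i = r i - b %ₘ m i)
    (hecount : (Finset.univ.filter fun i =>
      (lam : WithBot ℕ) < (e i).degree).card ≤ (d - 1) / 2)
    (hfcount : (Finset.univ.filter fun i =>
      (lam : WithBot ℕ) < (f i).degree).card ≤ (d - 1) / 2)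
    (heref : (e i0).degree ≤ (lam : WithBot ℕ))
    (hfref : (f i0).degree ≤ (lam : WithBot ℕ)) :
    a - a %ₘ m i0 = b - b %ₘ m i0 ∧ (a - b).degree ≤ (lam : WithBot ℕ) := by
  classical
  have hmne : ∀ i, m i ≠ 0 := fun i => (hmonic i).ne_zero
  set M := Finset.univ.lcm m with hM
  have hM0 : M ≠ 0 := by
    intro h
    have h2 := hm_lt i0
    rw [h, Polynomial.degree_zero] at h2
    exact (not_lt_bot h2)
  set c := a - b with hc
  set ρ := c %ₘ m i0 with hρ
  have hcmod : ∀ i, c %ₘ m i = f i - e i := by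
    intro i
    rw [he, hf, hc, sub_modByMonic]
    ring
  -- τ1 lower-bounds the gcd degrees
  have hτle : ∀ j, j ≠ i0 → τ1 ≤ (gcd (m i0) (m j)).natDegree := by
    intro j hj
    rw [hτ1]
    exact Nat.sInf_le ⟨j, hj, rfl⟩
  have hgne : ∀ j : Fin L, gcd (m i0) (m j) ≠ 0 := by
    intro j h
    exact hmne i0 ((gcd_eq_zero_iff _ _).mp h).1
  have hlam_lt_g : ∀ j, j ≠ i0 → (lam : WithBot ℕ) < (gcd (m i0) (m j)).degree := by
    intro j hj
    rw [Polynomial.degree_eq_natDegree (hgne j)]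
    exact_mod_cast lt_of_lt_of_le hlam (hτle j hj)
  -- lam < degree (m i0)
  obtain ⟨j0, hj0⟩ : ∃ j0 : Fin L, j0 ≠ i0 := by
    refine ⟨⟨1, by omega⟩, ?_⟩
    rw [hi0]
    intro h
    have := congrArg Fin.val h
    simp at this
  have hlam_lt_mi0 : (lam : WithBot ℕ) < (m i0).degree :=
    lt_of_lt_of_le (hlam_lt_g j0 hj0)
      (Polynomial.degree_le_of_dvd (gcd_dvd_left _ _) (hmne i0))
  have hlam_lt_M : (lam : WithBot ℕ) < M.degree := hlam_lt_mi0.trans (hm_lt i0)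
  -- degree bound on ρ
  have hρdeg : ρ.degree ≤ (lam : WithBot ℕ) := by
    rw [hρ, hcmod i0]
    exact (Polynomial.degree_sub_le _ _).trans (max_le hfref heref)
  -- good indices divide c - ρ
  have hgood : ∀ i, (e i).degree ≤ (lam : WithBot ℕ) → (f i).degree ≤ (lam : WithBot ℕ) →
      m i ∣ c - ρ := by
    intro i hei hfi
    have hdvd0 : m i0 ∣ c - c %ₘ m i0 := by
      rw [Polynomial.modByMonic_eq_sub_mul_div c (m i0), sub_sub_cancel]
      exact Dvd.intro _ rfl
    have hdvdi : m i ∣ c - c %ₘ m i := by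
      rw [Polynomial.modByMonic_eq_sub_mul_div c (m i), sub_sub_cancel]
      exact Dvd.intro _ rfl
    by_cases hii : i = i0
    · subst hii; exact hdvd0
    · have hg1 : gcd (m i0) (m i) ∣ (c %ₘ m i - ρ) := by
        have heq : c %ₘ m i - ρ = (c - c %ₘ m i0) - (c - c %ₘ m i) := by
          rw [hρ]; ring
        rw [heq]
        exact dvd_sub ((gcd_dvd_left _ _).trans hdvd0) ((gcd_dvd_right _ _).trans hdvdi)
      have hz : c %ₘ m i - ρ = 0 := by
        refine Polynomial.eq_zero_of_dvd_of_degree_lt hg1 ?_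
        refine lt_of_le_of_lt ?_ (hlam_lt_g i hii)
        rw [hcmod i]
        refine (Polynomial.degree_sub_le _ _).trans (max_le ?_ hρdeg)
        exact (Polynomial.degree_sub_le _ _).trans (max_le hfi hei)
      have : c %ₘ m i = ρ := by linear_combination hz
      rw [← this]
      exact hdvdi
  -- the difference c - ρ must vanish
  have hkey : c - ρ = 0 := by
    by_contra hne
    set k := (Finset.univ.filter fun i => ¬ m i ∣ (c - ρ)).card with hk
    have hcρdeg : (c - ρ).degree < M.degree := by
      refine lt_of_le_of_lt (Polynomial.degree_sub_le _ _) (max_lt ?_ (lt_of_le_of_lt hρdeg hlam_lt_M))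
      exact lt_of_le_of_lt (Polynomial.degree_sub_le _ _) (max_lt ha hb)
    have hdk : d ≤ k := by
      rw [hd]
      exact Nat.sInf_le ⟨c - ρ, hne, hcρdeg, rfl⟩
    have hk1 : 1 ≤ k := by
      by_contra h
      push_neg at h
      have hk0 : (Finset.univ.filter fun i => ¬ m i ∣ (c - ρ)) = ∅ :=
        Finset.card_eq_zero.mp (by omega)
      have hall : ∀ i : Fin L, m i ∣ c - ρ := by
        intro i
        by_contra hdvd
        have hmem : i ∈ Finset.univ.filter fun i => ¬ m i ∣ (c - ρ) := by
          simp [hdvd]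
        rw [hk0] at hmem
        exact Finset.notMem_empty i hmem
      have hMd : M ∣ c - ρ := Finset.lcm_dvd fun i _ => hall i
      exact absurd (Polynomial.degree_le_of_dvd hMd hne) (not_le_of_gt hcρdeg)
    have hsub : (Finset.univ.filter fun i => ¬ m i ∣ (c - ρ)) ⊆
        (Finset.univ.filter fun i => (lam : WithBot ℕ) < (e i).degree) ∪
        (Finset.univ.filter fun i => (lam : WithBot ℕ) < (f i).degree) := by
      intro i hi
      rw [Finset.mem_filter] at hi
      rw [Finset.mem_union, Finset.mem_filter, Finset.mem_filter]
      by_contra h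
      push_neg at h
      exact hi.2 (hgood i (h.1 (Finset.mem_univ i)) (h.2 (Finset.mem_univ i)))
    have hkle : k ≤ (d - 1) / 2 + (d - 1) / 2 := by
      calc k ≤ _ := Finset.card_le_card hsub
        _ ≤ _ := Finset.card_union_le _ _
        _ ≤ (d - 1) / 2 + (d - 1) / 2 := Nat.add_le_add hecount hfcount
    omega
  have hcρ : c = ρ := by linear_combination hkey
  constructor
  · have : c - c %ₘ m i0 = 0 := by
      rw [← hρ, hcρ, sub_self]
    have h2 : c %ₘ m i0 = a %ₘ m i0 - b %ₘ m i0 := by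
      rw [hc, sub_modByMonic]
    rw [hc, h2] at this
    linear_combination this
  · show c.degree ≤ (lam : WithBot ℕ)
    rw [hcρ]; exact hρdeg
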